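/- (Lemma: a bond space containing both integer and half-odd-integer spins violates injectivity.) Let N ≥ 1, let ι be a finite type, let A : ι → Matrix (Fin N) (Fin N) ℂ, let ε ∈ {1, -1} ⊆ ℂ, and let X ∈ Matrix (Fin N) (Fin N) ℂ satisfy X * X = 1, X ≠ 1, X ≠ -1 (an involution with both eigenvalues present, encoding the presence of both integer and half-odd-integer bond spins), and X * A m * X = ε • A m for all m : ι (ε = (−1)^{2J} for physical spin J). Then for every I ≥ 1 there exist two distinct matrices M ≠ M' in Matrix (Fin N) (Fin N) ℂ with Γ_I(M) = Γ_I(M'); i.e. Γ_I is not injective for any I. -/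

import Mathlib

open Matrix

/-- The MPS map `Γ_I`: given an MPS tensor `A`, length `I` and a boundary matrix `M`,
returns the coefficient function `σ ↦ trace (M * A (σ 0) * ⋯ * A (σ (I-1)))`. -/
noncomputable def GammaMPS {N : ℕ} {ι : Type*} (A : ι → Matrix (Fin N) (Fin N) ℂ)
    (I : ℕ) (M : Matrix (Fin N) (Fin N) ℂ) : (Fin I → ι) → ℂ :=
  fun σ => Matrix.trace (M * (List.ofFn fun i => A (σ i)).prod)

private lemma conj_list_prod {N : ℕ} {ι : Type*} (A : ι → Matrix (Fin N) (Fin N) ℂ)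
    (ε : ℂ) (X : Matrix (Fin N) (Fin N) ℂ) (hX2 : X * X = 1)
    (hconj : ∀ m : ι, X * A m * X = ε • A m) (l : List ι) :
    X * (l.map A).prod * X = ε ^ l.length • (l.map A).prod := by
  induction l with
  | nil => simp [hX2]
  | cons m l ih =>
    have step : X * ((m :: l).map A).prod * X = (X * A m * X) * (X * (l.map A).prod * X) := by
      simp only [List.map_cons, List.prod_cons]
      calc X * (A m * (l.map A).prod) * X
          = X * A m * ((X * X) * ((l.map A).prod * X)) := by
            rw [hX2]; simp only [one_mul, mul_assoc]
        _ = (X * A m * X) * (X * (l.map A).prod * X) := by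
            simp only [mul_assoc]
    rw [step, hconj, ih, smul_mul_smul_comm]
    simp [pow_succ, List.length_cons, mul_comm]

/-- Lemma: if the bond space carries a nontrivial involution `X` (both eigenvalues ±1
present, encoding both integer and half-odd-integer bond spins) conjugating the MPS
tensor into `ε • A m` with `ε = ±1`, then `Γ_I` is not injective for any length `I`. -/
theorem bond_mixed_spins_not_injective {N : ℕ} (hN : 1 ≤ N) {ι : Type*} [Fintype ι]
    (A : ι → Matrix (Fin N) (Fin N) ℂ)
    (ε : ℂ) (hε : ε ∈ ({1, -1} : Set ℂ))
    (X : Matrix (Fin N) (Fin N) ℂ)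
    (hX2 : X * X = 1) (hXne1 : X ≠ 1) (hXnem1 : X ≠ -1)
    (hconj : ∀ m : ι, X * A m * X = ε • A m) :
    ∀ I, 1 ≤ I → ∃ M M' : Matrix (Fin N) (Fin N) ℂ,
      M ≠ M' ∧ GammaMPS A I M = GammaMPS A I M' := by
  intro I _
  have : Nonempty (Fin N) := ⟨⟨0, hN⟩⟩
  have hεcases : ε = 1 ∨ ε = -1 := by simpa using hε
  have hε2 : ε ^ 2 = 1 := by rcases hεcases with h | h <;> simp [h]
  -- X is not scalar, hence does not commute with some matrix
  have hXnotscalar : ∃ M : Matrix (Fin N) (Fin N) ℂ, ¬ Commute M X := by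
    by_contra h
    push_neg at h
    obtain ⟨r, hr⟩ := Matrix.mem_range_scalar_iff_commute_single'.mpr fun i j => h _
    have hrr : r * r = 1 := by
      have h1 : (Matrix.scalar (Fin N)) (r * r) = (Matrix.scalar (Fin N)) 1 := by
        rw [_root_.map_mul, _root_.map_one, hr, hX2]
      exact Matrix.scalar_inj.mp h1
    rcases mul_self_eq_one_iff.mp hrr with h1 | h1
    · exact hXne1 (by rw [← hr, h1, _root_.map_one])
    · exact hXnem1 (by rw [← hr, h1, map_neg, _root_.map_one])
  -- key: Γ(ε^I • X M X) = Γ(M)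
  have key : ∀ M : Matrix (Fin N) (Fin N) ℂ,
      GammaMPS A I (ε ^ I • (X * M * X)) = GammaMPS A I M := by
    intro M
    funext σ
    have hlen : (List.ofFn σ).length = I := List.length_ofFn (f := σ)
    have hprod : (List.ofFn fun i => A (σ i)) = (List.ofFn σ).map A := by
      rw [List.map_ofFn]; rfl
    have hc := conj_list_prod A ε X hX2 hconj (List.ofFn σ)
    rw [hlen] at hc
    simp only [GammaMPS, hprod]
    set P := ((List.ofFn σ).map A).prod with hP
    have hassoc : X * M * X * P = X * (M * (X * P)) := by simp only [mul_assoc]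
    calc Matrix.trace (ε ^ I • (X * M * X) * P)
        = ε ^ I * Matrix.trace (M * (X * P * X)) := by
          rw [smul_mul_assoc, Matrix.trace_smul, smul_eq_mul]
          congr 1
          rw [hassoc, Matrix.trace_mul_comm X (M * (X * P))]
          simp only [mul_assoc]
      _ = ε ^ I * (ε ^ I * Matrix.trace (M * P)) := by
          rw [hc, Matrix.mul_smul, Matrix.trace_smul, smul_eq_mul]
      _ = Matrix.trace (M * P) := by
          rw [← mul_assoc, ← pow_add, ← two_mul, pow_mul, hε2, one_pow, one_mul]
  by_cases hcase : ε ^ I = 1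
  · obtain ⟨M, hM⟩ := hXnotscalar
    refine ⟨ε ^ I • (X * M * X), M, ?_, key M⟩
    rw [hcase, one_smul]
    intro h
    apply hM
    show M * X = X * M
    calc M * X = (X * M * X) * X := by rw [h]
      _ = X * M * (X * X) := by simp only [mul_assoc]
      _ = X * M := by rw [hX2, mul_one]
  · -- then ε ^ I = -1
    have hεI : ε ^ I = -1 := by
      rcases hεcases with h | h
      · exact absurd (by simp [h]) hcase
      · rcases Nat.even_or_odd I with he | ho
        · exact absurd (by rw [h, he.neg_one_pow]) hcase
        · rw [h, ho.neg_one_pow]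
    refine ⟨ε ^ I • (X * 1 * X), 1, ?_, key 1⟩
    rw [hεI, mul_one, hX2]
    intro h
    have h0 := congrFun (congrFun h ⟨0, hN⟩) ⟨0, hN⟩
    simp [Matrix.one_apply] at h0
    exact (by norm_num : (-1 : ℂ) ≠ 1) (by simpa using h0)
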